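/- Let R be a weight-preserving solution of the QDYB equation with spectral parameter and step γ, and let L be an L-operator for R on W = ℂᴺ with weight map w. Let ζ₁, …, ζₙ : ℂⁿ → ℂˣ be arbitrary functions and ξ(λ) = Σ_a ζ_a(λ) E_{a,a} ∈ End(ℂⁿ). Define R̃(u,λ) = (ξ^{(1)}(λ − γh^{(2)}))⁻¹ (ξ^{(2)}(λ))⁻¹ R(u,λ) ξ^{(1)}(λ) ξ^{(2)}(λ − γh^{(1)})) on V ⊗ V, and define L̃(u,λ) = (ξ^{(1)}(λ − γh^{(2)}))⁻¹ L(u,λ) ξ^{(1)}(λ) on V ⊗ W, where now ξ^{(1)}(λ − γh^{(2)}) acts on e_m ⊗ f_k as ζ_m(λ − γw(k)) e_m ⊗ f_k. Then R̃ is a weight-preserving solution of the QDYB equation with step γ, and L̃ is an L-operator for R̃ on W. -/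

import Mathlib

/-- Points of the dynamical parameter space `ℂⁿ` (also used as weights). -/
abbrev Wt (n : ℕ) : Type := Fin n → ℂ

noncomputable section

/-- The weight `ε_m` of the `m`-th standard basis vector of `V = ℂⁿ`. -/
def eps (n : ℕ) (m : Fin n) : Wt n := Pi.single m 1

variable {n : ℕ}

/-- `X^{12}` acting on the first two factors of a triple tensor product, with a
dynamical shift `λ ↦ λ − sh(c)` governed by the (basis vector of the) third
factor.  Operators on tensor products are realized as matrices indexed by
products of basis-index types. -/
def dop12 {A B C : Type*} [DecidableEq C]
    (X : Wt n → Matrix (A × B) (A × B) ℂ) (sh : C → Wt n) (lam : Wt n) :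
    Matrix (A × B × C) (A × B × C) ℂ :=
  fun p q => if p.2.2 = q.2.2 then X (lam - sh p.2.2) (p.1, p.2.1) (q.1, q.2.1) else 0

/-- `X^{13}` with a dynamical shift governed by the second factor. -/
def dop13 {A B C : Type*} [DecidableEq B]
    (X : Wt n → Matrix (A × C) (A × C) ℂ) (sh : B → Wt n) (lam : Wt n) :
    Matrix (A × B × C) (A × B × C) ℂ :=
  fun p q => if p.2.1 = q.2.1 then X (lam - sh p.2.1) (p.1, p.2.2) (q.1, q.2.2) else 0

/-- `X^{23}` with a dynamical shift governed by the first factor. -/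
def dop23 {A B C : Type*} [DecidableEq A]
    (X : Wt n → Matrix (B × C) (B × C) ℂ) (sh : A → Wt n) (lam : Wt n) :
    Matrix (A × B × C) (A × B × C) ℂ :=
  fun p q => if p.1 = q.1 then X (lam - sh p.1) (p.2.1, p.2.2) (q.2.1, q.2.2) else 0

/-- A matrix indexed by `A × B` (with weight maps `wA`, `wB`) is
weight-preserving if every nonzero entry connects basis vectors of equal
total weight. -/
def IsWeightPres {A B : Type*} (wA : A → Wt n) (wB : B → Wt n)
    (X : Matrix (A × B) (A × B) ℂ) : Prop :=
  ∀ p q, X p q ≠ 0 → wA p.1 + wB p.2 = wA q.1 + wB q.2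

/-- The quantum dynamical Yang–Baxter equation with spectral parameter and
step `γ` for `R : ℂ × ℂⁿ → End(V ⊗ V)`, `V = ℂⁿ`:
`R^{12}(u₁−u₂, λ−γh^{(3)}) R^{13}(u₁−u₃, λ) R^{23}(u₂−u₃, λ−γh^{(1)})
 = R^{23}(u₂−u₃, λ) R^{13}(u₁−u₃, λ−γh^{(2)}) R^{12}(u₁−u₂, λ)`. -/
def QDYB (n : ℕ) (γ : ℂ)
    (R : ℂ → Wt n → Matrix (Fin n × Fin n) (Fin n × Fin n) ℂ) : Prop :=
  ∀ u₁ u₂ u₃ : ℂ, ∀ lam : Wt n,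
    dop12 (R (u₁ - u₂)) (fun c : Fin n => γ • eps n c) lam *
        dop13 (R (u₁ - u₃)) (fun _ : Fin n => (0 : Wt n)) lam *
        dop23 (R (u₂ - u₃)) (fun a : Fin n => γ • eps n a) lam =
      dop23 (R (u₂ - u₃)) (fun _ : Fin n => (0 : Wt n)) lam *
        dop13 (R (u₁ - u₃)) (fun b : Fin n => γ • eps n b) lam *
        dop12 (R (u₁ - u₂)) (fun _ : Fin n => (0 : Wt n)) lam

/-- An L-operator for `R` on the space `W` with basis indexed by `K` and
weight map `w` (a representation of `R` on `W`): a weight-preserving function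
`L : ℂ × ℂⁿ → End(V ⊗ W)` satisfying
`R^{12}(u₁−u₂, λ−γh^{(3)}) L^{13}(u₁−u₃, λ) L^{23}(u₂−u₃, λ−γh^{(1)})
 = L^{23}(u₂−u₃, λ) L^{13}(u₁−u₃, λ−γh^{(2)}) R^{12}(u₁−u₂, λ)` on `V ⊗ V ⊗ W`. -/
def IsLOperator {K : Type*} [Fintype K] [DecidableEq K] (n : ℕ) (γ : ℂ)
    (R : ℂ → Wt n → Matrix (Fin n × Fin n) (Fin n × Fin n) ℂ)
    (w : K → Wt n) (L : ℂ → Wt n → Matrix (Fin n × K) (Fin n × K) ℂ) : Prop :=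
  (∀ u lam, IsWeightPres (eps n) w (L u lam)) ∧
    ∀ u₁ u₂ u₃ : ℂ, ∀ lam : Wt n,
      dop12 (R (u₁ - u₂)) (fun c : K => γ • w c) lam *
          dop13 (L (u₁ - u₃)) (fun _ : Fin n => (0 : Wt n)) lam *
          dop23 (L (u₂ - u₃)) (fun a : Fin n => γ • eps n a) lam =
        dop23 (L (u₂ - u₃)) (fun _ : Fin n => (0 : Wt n)) lam *
          dop13 (L (u₁ - u₃)) (fun b : Fin n => γ • eps n b) lam *
          dop12 (R (u₁ - u₂)) (fun _ : K => (0 : Wt n)) lam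

namespace DT

def twist {P : Type*} (l r : P → ℂ) (B : Matrix P P ℂ) : Matrix P P ℂ :=
  Matrix.of fun p q => l p * B p q * r q

lemma twist_apply {P : Type*} (l r : P → ℂ) (B : Matrix P P ℂ) (p q : P) :
    twist l r B p q = l p * B p q * r q := rfl

lemma twist_mul3 {P : Type*} [Fintype P] (l₁ r₁ l₂ r₂ l₃ r₃ φ ψ : P → ℂ)
    (B₁ B₂ B₃ : Matrix P P ℂ)
    (h : ∀ p r s q, B₁ p r ≠ 0 → B₂ r s ≠ 0 → B₃ s q ≠ 0 →
      l₁ p * r₁ r * l₂ r * r₂ s * l₃ s * r₃ q = φ p * ψ q) :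
    twist l₁ r₁ B₁ * twist l₂ r₂ B₂ * twist l₃ r₃ B₃ = twist φ ψ (B₁ * B₂ * B₃) := by
  ext p q
  simp only [Matrix.mul_apply, twist_apply, Finset.sum_mul, Finset.mul_sum]
  refine Finset.sum_congr rfl fun s _ => Finset.sum_congr rfl fun r _ => ?_
  by_cases h1 : B₁ p r = 0
  · simp [h1]
  by_cases h2 : B₂ r s = 0
  · simp [h2]
  by_cases h3 : B₃ s q = 0
  · simp [h3]
  have := h p r s q h1 h2 h3
  linear_combination B₁ p r * B₂ r s * B₃ s q * this

lemma dop12_twist {A B C : Type*} [DecidableEq C]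
    (X Y : Wt n → Matrix (A × B) (A × B) ℂ) (c c' : Wt n → (A × B) → ℂ)
    (hXY : ∀ μ i j, Y μ i j = c μ i * X μ i j * c' μ j)
    (sh : C → Wt n) (lam : Wt n) :
    dop12 Y sh lam =
      twist (fun p => c (lam - sh p.2.2) (p.1, p.2.1))
        (fun q => c' (lam - sh q.2.2) (q.1, q.2.1)) (dop12 X sh lam) := by
  ext p q
  simp only [dop12, twist_apply]
  split_ifs with h
  · rw [hXY, h]
  · ring

lemma dop13_twist {A B C : Type*} [DecidableEq B]
    (X Y : Wt n → Matrix (A × C) (A × C) ℂ) (c c' : Wt n → (A × C) → ℂ)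
    (hXY : ∀ μ i j, Y μ i j = c μ i * X μ i j * c' μ j)
    (sh : B → Wt n) (lam : Wt n) :
    dop13 Y sh lam =
      twist (fun p => c (lam - sh p.2.1) (p.1, p.2.2))
        (fun q => c' (lam - sh q.2.1) (q.1, q.2.2)) (dop13 X sh lam) := by
  ext p q
  simp only [dop13, twist_apply]
  split_ifs with h
  · rw [hXY, h]
  · ring

lemma dop23_twist {A B C : Type*} [DecidableEq A]
    (X Y : Wt n → Matrix (B × C) (B × C) ℂ) (c c' : Wt n → (B × C) → ℂ)
    (hXY : ∀ μ i j, Y μ i j = c μ i * X μ i j * c' μ j)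
    (sh : A → Wt n) (lam : Wt n) :
    dop23 Y sh lam =
      twist (fun p => c (lam - sh p.1) (p.2.1, p.2.2))
        (fun q => c' (lam - sh q.1) (q.2.1, q.2.2)) (dop23 X sh lam) := by
  ext p q
  simp only [dop23, twist_apply]
  split_ifs with h
  · rw [hXY, h]
  · ring

lemma dop12_ne {A B C : Type*} [DecidableEq C]
    {X : Wt n → Matrix (A × B) (A × B) ℂ} {sh : C → Wt n} {lam : Wt n}
    {p q : A × B × C} (h : dop12 X sh lam p q ≠ 0) :
    p.2.2 = q.2.2 ∧ X (lam - sh p.2.2) (p.1, p.2.1) (q.1, q.2.1) ≠ 0 := by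
  unfold dop12 at h
  split_ifs at h with hc
  · exact ⟨hc, h⟩
  · exact absurd rfl h

lemma dop13_ne {A B C : Type*} [DecidableEq B]
    {X : Wt n → Matrix (A × C) (A × C) ℂ} {sh : B → Wt n} {lam : Wt n}
    {p q : A × B × C} (h : dop13 X sh lam p q ≠ 0) :
    p.2.1 = q.2.1 ∧ X (lam - sh p.2.1) (p.1, p.2.2) (q.1, q.2.2) ≠ 0 := by
  unfold dop13 at h
  split_ifs at h with hc
  · exact ⟨hc, h⟩
  · exact absurd rfl h

lemma dop23_ne {A B C : Type*} [DecidableEq A]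
    {X : Wt n → Matrix (B × C) (B × C) ℂ} {sh : A → Wt n} {lam : Wt n}
    {p q : A × B × C} (h : dop23 X sh lam p q ≠ 0) :
    p.1 = q.1 ∧ X (lam - sh p.1) (p.2.1, p.2.2) (q.2.1, q.2.2) ≠ 0 := by
  unfold dop23 at h
  split_ifs at h with hc
  · exact ⟨hc, h⟩
  · exact absurd rfl h

lemma arg_shift (γ : ℂ) {x y x' y' : Wt n} (lam : Wt n) (E : x + y = x' + y') :
    lam - γ • x - γ • y = lam - γ • x' - γ • y' := by
  funext t
  have h := congrFun E t
  simp only [Pi.add_apply, Pi.sub_apply, Pi.smul_apply, smul_eq_mul] at *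
  linear_combination (-γ) * h

lemma sub_sub_swap (lam x y : Wt n) : lam - x - y = lam - y - x := by
  rw [sub_sub, sub_sub, add_comm]

/-- Core computation: twisting each factor by a diagonal dynamical twist
preserves the (generalized) dynamical Yang–Baxter relation. -/
lemma core {C : Type*} [Fintype C] [DecidableEq C] (γ : ℂ)
    (R12 Rt : Wt n → Matrix (Fin n × Fin n) (Fin n × Fin n) ℂ)
    (M13 Mt13 M23 Mt23 : Wt n → Matrix (Fin n × C) (Fin n × C) ℂ)
    (wC : C → Wt n) (ζ : Fin n → Wt n → ℂˣ) (θ : C → Wt n → ℂˣ)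
    (hwR : ∀ lam, IsWeightPres (eps n) (eps n) (R12 lam))
    (hw13 : ∀ lam, IsWeightPres (eps n) wC (M13 lam))
    (hw23 : ∀ lam, IsWeightPres (eps n) wC (M23 lam))
    (hRt : ∀ μ (i j : Fin n × Fin n), Rt μ i j =
      ((((ζ i.1 (μ - γ • eps n i.2))⁻¹ : ℂˣ) : ℂ) * (((ζ i.2 μ)⁻¹ : ℂˣ) : ℂ)) * R12 μ i j *
        ((ζ j.1 μ : ℂ) * (ζ j.2 (μ - γ • eps n j.1) : ℂ)))
    (hMt13 : ∀ μ (i j : Fin n × C), Mt13 μ i j =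
      ((((ζ i.1 (μ - γ • wC i.2))⁻¹ : ℂˣ) : ℂ) * (((θ i.2 μ)⁻¹ : ℂˣ) : ℂ)) * M13 μ i j *
        ((ζ j.1 μ : ℂ) * (θ j.2 (μ - γ • eps n j.1) : ℂ)))
    (hMt23 : ∀ μ (i j : Fin n × C), Mt23 μ i j =
      ((((ζ i.1 (μ - γ • wC i.2))⁻¹ : ℂˣ) : ℂ) * (((θ i.2 μ)⁻¹ : ℂˣ) : ℂ)) * M23 μ i j *
        ((ζ j.1 μ : ℂ) * (θ j.2 (μ - γ • eps n j.1) : ℂ)))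
    (lam : Wt n)
    (heq : dop12 R12 (fun c : C => γ • wC c) lam * dop13 M13 (fun _ : Fin n => (0 : Wt n)) lam *
        dop23 M23 (fun a : Fin n => γ • eps n a) lam =
      dop23 M23 (fun _ : Fin n => (0 : Wt n)) lam * dop13 M13 (fun b : Fin n => γ • eps n b) lam *
        dop12 R12 (fun _ : C => (0 : Wt n)) lam) :
    dop12 Rt (fun c : C => γ • wC c) lam * dop13 Mt13 (fun _ : Fin n => (0 : Wt n)) lam *
        dop23 Mt23 (fun a : Fin n => γ • eps n a) lam =
      dop23 Mt23 (fun _ : Fin n => (0 : Wt n)) lam * dop13 Mt13 (fun b : Fin n => γ • eps n b) lam *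
        dop12 Rt (fun _ : C => (0 : Wt n)) lam := by
  set φ : (Fin n × Fin n × C) → ℂ := fun p =>
    (((ζ p.1 (lam - γ • eps n p.2.1 - γ • wC p.2.2))⁻¹ : ℂˣ) : ℂ) *
      (((ζ p.2.1 (lam - γ • wC p.2.2))⁻¹ : ℂˣ) : ℂ) * (((θ p.2.2 lam)⁻¹ : ℂˣ) : ℂ) with hφ
  set ψ : (Fin n × Fin n × C) → ℂ := fun q =>
    (ζ q.1 lam : ℂ) * (ζ q.2.1 (lam - γ • eps n q.1) : ℂ) *
      (θ q.2.2 (lam - γ • eps n q.1 - γ • eps n q.2.1) : ℂ) with hψ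
  have e1 := dop12_twist R12 Rt
    (fun μ i => (((ζ i.1 (μ - γ • eps n i.2))⁻¹ : ℂˣ) : ℂ) * (((ζ i.2 μ)⁻¹ : ℂˣ) : ℂ))
    (fun μ j => (ζ j.1 μ : ℂ) * (ζ j.2 (μ - γ • eps n j.1) : ℂ)) hRt
    (fun c : C => γ • wC c) lam
  have e1' := dop12_twist R12 Rt
    (fun μ i => (((ζ i.1 (μ - γ • eps n i.2))⁻¹ : ℂˣ) : ℂ) * (((ζ i.2 μ)⁻¹ : ℂˣ) : ℂ))
    (fun μ j => (ζ j.1 μ : ℂ) * (ζ j.2 (μ - γ • eps n j.1) : ℂ)) hRt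
    (fun _ : C => (0 : Wt n)) lam
  have e2 := dop13_twist M13 Mt13
    (fun μ i => (((ζ i.1 (μ - γ • wC i.2))⁻¹ : ℂˣ) : ℂ) * (((θ i.2 μ)⁻¹ : ℂˣ) : ℂ))
    (fun μ j => (ζ j.1 μ : ℂ) * (θ j.2 (μ - γ • eps n j.1) : ℂ)) hMt13
    (fun _ : Fin n => (0 : Wt n)) lam
  have e2' := dop13_twist M13 Mt13
    (fun μ i => (((ζ i.1 (μ - γ • wC i.2))⁻¹ : ℂˣ) : ℂ) * (((θ i.2 μ)⁻¹ : ℂˣ) : ℂ))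
    (fun μ j => (ζ j.1 μ : ℂ) * (θ j.2 (μ - γ • eps n j.1) : ℂ)) hMt13
    (fun b : Fin n => γ • eps n b) lam
  have e3 := dop23_twist M23 Mt23
    (fun μ i => (((ζ i.1 (μ - γ • wC i.2))⁻¹ : ℂˣ) : ℂ) * (((θ i.2 μ)⁻¹ : ℂˣ) : ℂ))
    (fun μ j => (ζ j.1 μ : ℂ) * (θ j.2 (μ - γ • eps n j.1) : ℂ)) hMt23
    (fun a : Fin n => γ • eps n a) lam
  have e3' := dop23_twist M23 Mt23
    (fun μ i => (((ζ i.1 (μ - γ • wC i.2))⁻¹ : ℂˣ) : ℂ) * (((θ i.2 μ)⁻¹ : ℂˣ) : ℂ))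
    (fun μ j => (ζ j.1 μ : ℂ) * (θ j.2 (μ - γ • eps n j.1) : ℂ)) hMt23
    (fun _ : Fin n => (0 : Wt n)) lam
  rw [e1, e2, e3, e1', e2', e3']
  refine (twist_mul3 _ _ _ _ _ _ φ ψ _ _ _ ?_).trans ?_
  · rintro ⟨a1, b1, k1⟩ ⟨a2, b2, k2⟩ ⟨a3, b3, k3⟩ ⟨a4, b4, k4⟩ h1 h2 h3
    obtain ⟨hk, hB1⟩ := dop12_ne h1
    obtain ⟨hb, hB2⟩ := dop13_ne h2
    obtain ⟨ha, hB3⟩ := dop23_ne h3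
    simp only at hk hb ha
    subst hk hb ha
    have E2 := hw13 _ _ _ hB2
    simp only at E2 ⊢
    have hkey : lam - γ • wC k1 - γ • eps n a2 = lam - γ • eps n a3 - γ • wC k3 := by
      refine arg_shift γ lam ?_
      rw [add_comm (wC k1)]
      exact E2
    have hswap : lam - γ • wC k1 - γ • eps n b1 = lam - γ • eps n b1 - γ • wC k1 :=
      sub_sub_swap lam _ _
    simp only [sub_zero, hφ, hψ, hkey, hswap]
    simp only [Units.val_inv_eq_inv_val]
    field_simp
  rw [heq]
  refine (twist_mul3 _ _ _ _ _ _ φ ψ _ _ _ ?_).symm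
  rintro ⟨a1, b1, k1⟩ ⟨a2, b2, k2⟩ ⟨a3, b3, k3⟩ ⟨a4, b4, k4⟩ h1 h2 h3
  obtain ⟨ha, hB1⟩ := dop23_ne h1
  obtain ⟨hb, hB2⟩ := dop13_ne h2
  obtain ⟨hk, hB3⟩ := dop12_ne h3
  simp only at hk hb ha
  subst ha hb hk
  have E1 := hw23 _ _ _ hB1
  have E3 := hwR _ _ _ hB3
  simp only at E1 E3 ⊢
  have hkey1 : lam - γ • eps n b2 - γ • wC k2 = lam - γ • eps n b1 - γ • wC k1 :=
    arg_shift γ lam E1.symm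
  have hkey2 : lam - γ • eps n b2 - γ • eps n a3 = lam - γ • eps n a4 - γ • eps n b4 := by
    refine arg_shift γ lam ?_
    rw [add_comm (eps n b2)]
    exact E3
  simp only [sub_zero, hφ, hψ, hkey1, hkey2]
  simp only [Units.val_inv_eq_inv_val]
  field_simp

end DT

/-- gauge transformation of an R-matrix and of an L-operator
by a diagonal dynamical twist `ξ(λ) = Σ_a ζ_a(λ) E_{a,a}`.  If `R` is a
weight-preserving solution of the QDYB equation with step `γ` and `L` is an
L-operator for `R` on `W = ℂᴺ` with weight map `w`, then
`R̃(u,λ) = (ξ^{(1)}(λ−γh^{(2)}))⁻¹ (ξ^{(2)}(λ))⁻¹ R(u,λ) ξ^{(1)}(λ) ξ^{(2)}(λ−γh^{(1)})`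
is again a weight-preserving solution of the QDYB equation with step `γ`, and
`L̃(u,λ) = (ξ^{(1)}(λ−γh^{(2)}))⁻¹ L(u,λ) ξ^{(1)}(λ)` is an L-operator for `R̃`
on `W`. -/
theorem diagonal_twist_rmatrix_and_lop (n N : ℕ) (hn : 1 ≤ n) (hN : 1 ≤ N) (γ : ℂ)
    (R : ℂ → Wt n → Matrix (Fin n × Fin n) (Fin n × Fin n) ℂ)
    (hwt : ∀ u lam, IsWeightPres (eps n) (eps n) (R u lam))
    (hR : QDYB n γ R)
    (w : Fin N → Wt n)
    (L : ℂ → Wt n → Matrix (Fin n × Fin N) (Fin n × Fin N) ℂ)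
    (hL : IsLOperator n γ R w L)
    (ζ : Fin n → Wt n → ℂˣ) :
    (∀ u lam, IsWeightPres (eps n) (eps n)
      ((fun u lam =>
        Matrix.diagonal (fun p : Fin n × Fin n =>
            (((ζ p.1 (lam - γ • eps n p.2))⁻¹ : ℂˣ) : ℂ)) *
          Matrix.diagonal (fun p : Fin n × Fin n => (((ζ p.2 lam)⁻¹ : ℂˣ) : ℂ)) *
          R u lam *
          Matrix.diagonal (fun p : Fin n × Fin n => (ζ p.1 lam : ℂ)) *
          Matrix.diagonal (fun p : Fin n × Fin n =>
            (ζ p.2 (lam - γ • eps n p.1) : ℂ))) u lam)) ∧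
    QDYB n γ (fun u lam =>
        Matrix.diagonal (fun p : Fin n × Fin n =>
            (((ζ p.1 (lam - γ • eps n p.2))⁻¹ : ℂˣ) : ℂ)) *
          Matrix.diagonal (fun p : Fin n × Fin n => (((ζ p.2 lam)⁻¹ : ℂˣ) : ℂ)) *
          R u lam *
          Matrix.diagonal (fun p : Fin n × Fin n => (ζ p.1 lam : ℂ)) *
          Matrix.diagonal (fun p : Fin n × Fin n =>
            (ζ p.2 (lam - γ • eps n p.1) : ℂ))) ∧
    IsLOperator n γ
      (fun u lam =>
        Matrix.diagonal (fun p : Fin n × Fin n =>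
            (((ζ p.1 (lam - γ • eps n p.2))⁻¹ : ℂˣ) : ℂ)) *
          Matrix.diagonal (fun p : Fin n × Fin n => (((ζ p.2 lam)⁻¹ : ℂˣ) : ℂ)) *
          R u lam *
          Matrix.diagonal (fun p : Fin n × Fin n => (ζ p.1 lam : ℂ)) *
          Matrix.diagonal (fun p : Fin n × Fin n =>
            (ζ p.2 (lam - γ • eps n p.1) : ℂ)))
      w
      (fun u lam =>
        Matrix.diagonal (fun p : Fin n × Fin N =>
            (((ζ p.1 (lam - γ • w p.2))⁻¹ : ℂˣ) : ℂ)) *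
          L u lam *
          Matrix.diagonal (fun p : Fin n × Fin N => (ζ p.1 lam : ℂ))) := by
  obtain ⟨hLwt, hLeq⟩ := hL
  have tR : ∀ u μ (i j : Fin n × Fin n),
      (Matrix.diagonal (fun p : Fin n × Fin n =>
            (((ζ p.1 (μ - γ • eps n p.2))⁻¹ : ℂˣ) : ℂ)) *
          Matrix.diagonal (fun p : Fin n × Fin n => (((ζ p.2 μ)⁻¹ : ℂˣ) : ℂ)) *
          R u μ *
          Matrix.diagonal (fun p : Fin n × Fin n => (ζ p.1 μ : ℂ)) *
          Matrix.diagonal (fun p : Fin n × Fin n =>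
            (ζ p.2 (μ - γ • eps n p.1) : ℂ))) i j =
        ((((ζ i.1 (μ - γ • eps n i.2))⁻¹ : ℂˣ) : ℂ) * (((ζ i.2 μ)⁻¹ : ℂˣ) : ℂ)) * R u μ i j *
          ((ζ j.1 μ : ℂ) * (ζ j.2 (μ - γ • eps n j.1) : ℂ)) := by
    intro u μ i j
    rw [Matrix.mul_diagonal, Matrix.mul_diagonal, Matrix.diagonal_mul_diagonal,
      Matrix.diagonal_mul]
    ring
  have tL : ∀ u μ (i j : Fin n × Fin N),
      (Matrix.diagonal (fun p : Fin n × Fin N =>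
            (((ζ p.1 (μ - γ • w p.2))⁻¹ : ℂˣ) : ℂ)) *
          L u μ *
          Matrix.diagonal (fun p : Fin n × Fin N => (ζ p.1 μ : ℂ))) i j =
        ((((ζ i.1 (μ - γ • w i.2))⁻¹ : ℂˣ) : ℂ) * ((((1 : ℂˣ))⁻¹ : ℂˣ) : ℂ)) * L u μ i j *
          ((ζ j.1 μ : ℂ) * ((1 : ℂˣ) : ℂ)) := by
    intro u μ i j
    rw [Matrix.mul_diagonal, Matrix.diagonal_mul]
    simp
  refine ⟨?_, ?_, ?_, ?_⟩
  · intro u lam p q hne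
    simp only at hne
    rw [tR u lam p q] at hne
    refine hwt u lam p q fun h0 => hne ?_
    rw [h0]
    ring
  · intro u₁ u₂ u₃ lam
    exact DT.core γ (R (u₁ - u₂)) _ (R (u₁ - u₃)) _ (R (u₂ - u₃)) _ (eps n) ζ ζ
      (hwt (u₁ - u₂)) (hwt (u₁ - u₃)) (hwt (u₂ - u₃))
      (tR (u₁ - u₂)) (tR (u₁ - u₃)) (tR (u₂ - u₃)) lam (hR u₁ u₂ u₃ lam)
  · intro u lam p q hne
    simp only at hne
    rw [tL u lam p q] at hne
    refine hLwt u lam p q fun h0 => hne ?_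
    rw [h0]
    ring
  · intro u₁ u₂ u₃ lam
    exact DT.core γ (R (u₁ - u₂)) _ (L (u₁ - u₃)) _ (L (u₂ - u₃)) _ w ζ (fun _ _ => 1)
      (hwt (u₁ - u₂)) (hLwt (u₁ - u₃)) (hLwt (u₂ - u₃))
      (tR (u₁ - u₂)) (tL (u₁ - u₃)) (tL (u₂ - u₃)) lam (hLeq u₁ u₂ u₃ lam)
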